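/- Assume μ and ν are probability measures on 𝒴 satisfying the marginal normalization conditions ∫ ξ(y₁, y₂) dμ(y₁) = 1 for every y₂ ∈ 𝒴 and ∫ ξ(y₁, y₂) dν(y₂) = 1 for every y₁ ∈ 𝒴. Then for all balanced finite signed measures γ¹, γ² on 𝒴 and all t ∈ ℝ: D(μ + tγ¹, ν + tγ²) = D(μ, ν) + t · (∫ φ₁ dγ¹ + ∫ φ₀ dγ²) − t² ε ∫∫ ξ(y₁, y₂) dγ¹(y₁) dγ²(y₂). -/

import Mathlib

open MeasureTheory

set_option maxHeartbeats 1000000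

/-- Integration of a real-valued function against a finite signed measure, defined as the
difference of the integrals against the positive and negative parts of its Jordan
decomposition. -/
noncomputable def signedIntegral {𝒴 : Type*} [MeasurableSpace 𝒴]
    (γ : SignedMeasure 𝒴) (f : 𝒴 → ℝ) : ℝ :=
  (∫ y, f y ∂γ.toJordanDecomposition.posPart) - ∫ y, f y ∂γ.toJordanDecomposition.negPart

/-- The Gibbs density `ξ(y₁, y₂) = exp((φ₁(y₁) + φ₀(y₂) − c(y₁, y₂))/ε)`. -/
noncomputable def gibbsDensity {𝒴 : Type*} (ε : ℝ) (φ₁ φ₀ : 𝒴 → ℝ) (c : 𝒴 × 𝒴 → ℝ)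
    (y₁ y₂ : 𝒴) : ℝ :=
  Real.exp ((φ₁ y₁ + φ₀ y₂ - c (y₁, y₂)) / ε)

/-- The entropic dual functional
`D(α, β) = ∫ φ₁ dα + ∫ φ₀ dβ − ε ∫∫ ξ(y₁, y₂) dα(y₁) dβ(y₂) + ε`
on pairs of finite signed measures. -/
noncomputable def entropicDual {𝒴 : Type*} [MeasurableSpace 𝒴]
    (ε : ℝ) (φ₁ φ₀ : 𝒴 → ℝ) (c : 𝒴 × 𝒴 → ℝ) (α β : SignedMeasure 𝒴) : ℝ :=
  signedIntegral α φ₁ + signedIntegral β φ₀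
    - ε * signedIntegral α (fun y₁ => signedIntegral β (fun y₂ =>
        gibbsDensity ε φ₁ φ₀ c y₁ y₂)) + ε

namespace EDQE

variable {𝒴 : Type*} [MeasurableSpace 𝒴]

/-- Bounded strongly measurable functions are integrable w.r.t. finite measures. -/
lemma integrable_of_bdd {f : 𝒴 → ℝ} {C : ℝ}
    (hf : StronglyMeasurable f) (hb : ∀ y, |f y| ≤ C)
    (κ : Measure 𝒴) [IsFiniteMeasure κ] : Integrable f κ :=
  (integrable_const C).mono' hf.aestronglyMeasurable
    (Filter.Eventually.of_forall fun y => by simpa [Real.norm_eq_abs] using hb y)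

lemma signedIntegral_eq_of {γ : SignedMeasure 𝒴} {μ₁ μ₂ : Measure 𝒴}
    [IsFiniteMeasure μ₁] [IsFiniteMeasure μ₂]
    (h : γ = μ₁.toSignedMeasure - μ₂.toSignedMeasure)
    {f : 𝒴 → ℝ} (hInt : ∀ (κ : Measure 𝒴) [IsFiniteMeasure κ], Integrable f κ) :
    signedIntegral γ f = (∫ y, f y ∂μ₁) - ∫ y, f y ∂μ₂ := by
  set p := γ.toJordanDecomposition.posPart with hp
  set n := γ.toJordanDecomposition.negPart with hn
  have hpn : p.toSignedMeasure - n.toSignedMeasure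
      = μ₁.toSignedMeasure - μ₂.toSignedMeasure := by
    rw [← h]
    conv_rhs => rw [← γ.toSignedMeasure_toJordanDecomposition]
    rfl
  have hmeas : p + μ₂ = μ₁ + n := by
    rw [← Measure.toSignedMeasure_eq_toSignedMeasure_iff,
      Measure.toSignedMeasure_add, Measure.toSignedMeasure_add]
    have := sub_eq_sub_iff_add_eq_add.mp hpn
    linear_combination (norm := abel_nf) this
  have hint : (∫ y, f y ∂p) + ∫ y, f y ∂μ₂ = (∫ y, f y ∂μ₁) + ∫ y, f y ∂n := by
    rw [← integral_add_measure (hInt p) (hInt μ₂), ← integral_add_measure (hInt μ₁) (hInt n),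
      hmeas]
  simp only [signedIntegral, ← hp, ← hn]
  linarith

lemma signedIntegral_toSignedMeasure (κ : Measure 𝒴) [IsFiniteMeasure κ]
    {f : 𝒴 → ℝ} (hInt : ∀ (κ : Measure 𝒴) [IsFiniteMeasure κ], Integrable f κ) :
    signedIntegral κ.toSignedMeasure f = ∫ y, f y ∂κ := by
  rw [signedIntegral_eq_of (μ₁ := κ) (μ₂ := 0) (by simp) hInt]
  simp

lemma signedIntegral_add (α β : SignedMeasure 𝒴)
    {f : 𝒴 → ℝ} (hInt : ∀ (κ : Measure 𝒴) [IsFiniteMeasure κ], Integrable f κ) :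
    signedIntegral (α + β) f = signedIntegral α f + signedIntegral β f := by
  rw [signedIntegral_eq_of
    (μ₁ := α.toJordanDecomposition.posPart + β.toJordanDecomposition.posPart)
    (μ₂ := α.toJordanDecomposition.negPart + β.toJordanDecomposition.negPart)
    ?_ hInt]
  · rw [integral_add_measure (hInt _) (hInt _), integral_add_measure (hInt _) (hInt _)]
    simp only [signedIntegral]; ring
  · rw [Measure.toSignedMeasure_add, Measure.toSignedMeasure_add]
    conv_lhs => rw [← α.toSignedMeasure_toJordanDecomposition,
      ← β.toSignedMeasure_toJordanDecomposition]
    simp only [MeasureTheory.JordanDecomposition.toSignedMeasure]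
    abel

lemma signedIntegral_smul (r : ℝ) (γ : SignedMeasure 𝒴) (f : 𝒴 → ℝ) :
    signedIntegral (r • γ) f = r * signedIntegral γ f := by
  rcases le_or_gt 0 r with hr | hr
  · simp only [signedIntegral, SignedMeasure.toJordanDecomposition_smul_real,
      JordanDecomposition.real_smul_posPart_nonneg _ _ hr,
      JordanDecomposition.real_smul_negPart_nonneg _ _ hr,
      integral_smul_nnreal_measure]
    rw [NNReal.smul_def, NNReal.smul_def, smul_eq_mul, smul_eq_mul,
      Real.coe_toNNReal r hr]; ring
  · simp only [signedIntegral, SignedMeasure.toJordanDecomposition_smul_real,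
      JordanDecomposition.real_smul_posPart_neg _ _ hr,
      JordanDecomposition.real_smul_negPart_neg _ _ hr,
      integral_smul_nnreal_measure]
    rw [NNReal.smul_def, NNReal.smul_def, smul_eq_mul, smul_eq_mul,
      Real.coe_toNNReal _ (by linarith : (0:ℝ) ≤ -r)]; ring

lemma jordan_univ_eq {γ : SignedMeasure 𝒴} (hγ : γ Set.univ = 0) :
    (γ.toJordanDecomposition.posPart Set.univ).toReal
      = (γ.toJordanDecomposition.negPart Set.univ).toReal := by
  have h2 : γ Set.univ = (γ.toJordanDecomposition.posPart Set.univ).toReal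
      - (γ.toJordanDecomposition.negPart Set.univ).toReal := by
    conv_lhs => rw [← γ.toSignedMeasure_toJordanDecomposition]
    exact Measure.toSignedMeasure_sub_apply MeasurableSet.univ
  rw [hγ] at h2
  linarith

lemma signedIntegral_const_add_mul (γ : SignedMeasure 𝒴) (hγ : γ Set.univ = 0) (a s : ℝ)
    {g : 𝒴 → ℝ} (hg : ∀ (κ : Measure 𝒴) [IsFiniteMeasure κ], Integrable g κ) :
    signedIntegral γ (fun y => a + s * g y) = s * signedIntegral γ g := by
  have key : ∀ (κ : Measure 𝒴) [IsFiniteMeasure κ],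
      (∫ y, (a + s * g y) ∂κ) = (κ Set.univ).toReal * a + s * ∫ y, g y ∂κ := by
    intro κ _
    rw [integral_add (integrable_const a) ((hg κ).const_mul s), integral_const,
      integral_const_mul]
    simp [smul_eq_mul, Measure.real]
  simp only [signedIntegral, key, jordan_univ_eq hγ]
  ring

end EDQE

/-- Exact quadratic expansion of the entropic dual functional.
Let `φ₁, φ₀, c` be bounded measurable, `ε > 0`, and `ξ` the Gibbs density.  If `μ, ν`
are probability measures on `𝒴` satisfying the marginal normalization conditions
`∫ ξ(·, y₂) dμ = 1` and `∫ ξ(y₁, ·) dν = 1`, then for all balanced finite signed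
measures `γ₁, γ₂` and all `t ∈ ℝ`:
`D(μ + tγ₁, ν + tγ₂) = D(μ, ν) + t (∫ φ₁ dγ₁ + ∫ φ₀ dγ₂) − t² ε ∫∫ ξ dγ₁ dγ₂`. -/
theorem entropicDual_quadratic_expansion
    {𝒴 : Type*} [MeasurableSpace 𝒴]
    (ε : ℝ) (hε : 0 < ε)
    (φ₁ φ₀ : 𝒴 → ℝ) (c : 𝒴 × 𝒴 → ℝ)
    (hφ₁m : Measurable φ₁) (hφ₀m : Measurable φ₀) (hcm : Measurable c)
    (hφ₁b : ∃ C, ∀ y, |φ₁ y| ≤ C) (hφ₀b : ∃ C, ∀ y, |φ₀ y| ≤ C)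
    (hcb : ∃ C, ∀ p, |c p| ≤ C)
    (μ ν : Measure 𝒴) [IsProbabilityMeasure μ] [IsProbabilityMeasure ν]
    (hμnorm : ∀ y₂, ∫ y₁, gibbsDensity ε φ₁ φ₀ c y₁ y₂ ∂μ = 1)
    (hνnorm : ∀ y₁, ∫ y₂, gibbsDensity ε φ₁ φ₀ c y₁ y₂ ∂ν = 1)
    (γ₁ γ₂ : SignedMeasure 𝒴)
    (hγ₁ : γ₁ Set.univ = 0) (hγ₂ : γ₂ Set.univ = 0)
    (t : ℝ) :
    entropicDual ε φ₁ φ₀ c (μ.toSignedMeasure + t • γ₁) (ν.toSignedMeasure + t • γ₂)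
      = entropicDual ε φ₁ φ₀ c μ.toSignedMeasure ν.toSignedMeasure
        + t * (signedIntegral γ₁ φ₁ + signedIntegral γ₂ φ₀)
        - t^2 * ε * signedIntegral γ₁ (fun y₁ => signedIntegral γ₂ (fun y₂ =>
            gibbsDensity ε φ₁ φ₀ c y₁ y₂)) := by
  classical
  obtain ⟨C₁, hC₁⟩ := hφ₁b
  obtain ⟨C₀, hC₀⟩ := hφ₀b
  obtain ⟨Cc, hCc⟩ := hcb
  set K : ℝ := Real.exp ((C₁ + C₀ + Cc) / ε) with hK
  -- measurability of the (uncurried) Gibbs density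
  have hξm : Measurable (fun p : 𝒴 × 𝒴 => gibbsDensity ε φ₁ φ₀ c p.1 p.2) := by
    have hc' : Measurable (fun p : 𝒴 × 𝒴 => c (p.1, p.2)) := by
      simpa using hcm
    exact Real.measurable_exp.comp
      ((((hφ₁m.comp measurable_fst).add (hφ₀m.comp measurable_snd)).sub hc').div_const ε)
  -- boundedness of the Gibbs density
  have hξb : ∀ y₁ y₂, |gibbsDensity ε φ₁ φ₀ c y₁ y₂| ≤ K := by
    intro y₁ y₂
    rw [gibbsDensity, abs_of_pos (Real.exp_pos _), hK]
    apply Real.exp_le_exp.mpr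
    have h1 := abs_le.mp (hC₁ y₁)
    have h0 := abs_le.mp (hC₀ y₂)
    have hc := abs_le.mp (hCc (y₁, y₂))
    gcongr
    linarith
  have hξint : ∀ y₁, ∀ (κ : Measure 𝒴) [IsFiniteMeasure κ],
      Integrable (fun y₂ => gibbsDensity ε φ₁ φ₀ c y₁ y₂) κ := by
    intro y₁ κ _
    exact EDQE.integrable_of_bdd
      ((hξm.comp (measurable_prodMk_left (x := y₁))).stronglyMeasurable)
      (fun y₂ => hξb y₁ y₂) κ
  have hφ₁int : ∀ (κ : Measure 𝒴) [IsFiniteMeasure κ], Integrable φ₁ κ :=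
    fun κ _ => EDQE.integrable_of_bdd hφ₁m.stronglyMeasurable hC₁ κ
  have hφ₀int : ∀ (κ : Measure 𝒴) [IsFiniteMeasure κ], Integrable φ₀ κ :=
    fun κ _ => EDQE.integrable_of_bdd hφ₀m.stronglyMeasurable hC₀ κ
  -- the perturbation kernel g
  set p₂ := γ₂.toJordanDecomposition.posPart with hp₂
  set n₂ := γ₂.toJordanDecomposition.negPart with hn₂
  set g : 𝒴 → ℝ := fun y₁ => signedIntegral γ₂ (fun y₂ =>
      gibbsDensity ε φ₁ φ₀ c y₁ y₂) with hgdef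
  have hgeq : g = fun y₁ => (∫ y₂, gibbsDensity ε φ₁ φ₀ c y₁ y₂ ∂p₂)
      - ∫ y₂, gibbsDensity ε φ₁ φ₀ c y₁ y₂ ∂n₂ := rfl
  have hpm : StronglyMeasurable (fun y₁ => ∫ y₂, gibbsDensity ε φ₁ φ₀ c y₁ y₂ ∂p₂) :=
    hξm.stronglyMeasurable.integral_prod_right'
  have hnm : StronglyMeasurable (fun y₁ => ∫ y₂, gibbsDensity ε φ₁ φ₀ c y₁ y₂ ∂n₂) :=
    hξm.stronglyMeasurable.integral_prod_right'
  have hgm : StronglyMeasurable g := hgeq ▸ hpm.sub hnm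
  have hbd : ∀ (κ : Measure 𝒴) [IsFiniteMeasure κ], ∀ y₁,
      |∫ y₂, gibbsDensity ε φ₁ φ₀ c y₁ y₂ ∂κ| ≤ K * (κ Set.univ).toReal := by
    intro κ _ y₁
    have := norm_integral_le_of_norm_le_const (μ := κ)
      (f := fun y₂ => gibbsDensity ε φ₁ φ₀ c y₁ y₂) (C := K)
      (Filter.Eventually.of_forall fun y₂ => by
        simpa [Real.norm_eq_abs] using hξb y₁ y₂)
    simpa [Real.norm_eq_abs, Measure.real] using this
  have hgb : ∀ y₁, |g y₁| ≤ K * (p₂ Set.univ).toReal + K * (n₂ Set.univ).toReal := by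
    intro y₁
    rw [hgeq]
    calc |_ - _| ≤ |∫ y₂, gibbsDensity ε φ₁ φ₀ c y₁ y₂ ∂p₂|
        + |∫ y₂, gibbsDensity ε φ₁ φ₀ c y₁ y₂ ∂n₂| := abs_sub _ _
      _ ≤ _ := add_le_add (hbd p₂ y₁) (hbd n₂ y₁)
  have hgint : ∀ (κ : Measure 𝒴) [IsFiniteMeasure κ], Integrable g κ :=
    fun κ _ => EDQE.integrable_of_bdd hgm hgb κ
  -- Fubini: integrating the Gibbs density against μ in the first variable
  have hswap : ∀ (κ : Measure 𝒴) [IsFiniteMeasure κ],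
      (∫ y₁, (∫ y₂, gibbsDensity ε φ₁ φ₀ c y₁ y₂ ∂κ) ∂μ) = (κ Set.univ).toReal := by
    intro κ _
    rw [MeasureTheory.integral_integral_swap]
    · simp [hμnorm]; rfl
    · exact EDQE.integrable_of_bdd hξm.stronglyMeasurable
        (fun p => hξb p.1 p.2) (μ.prod κ)
  have hgμ : (∫ y₁, g y₁ ∂μ) = 0 := by
    rw [hgeq]
    rw [integral_sub
      (EDQE.integrable_of_bdd hpm (fun y₁ => hbd p₂ y₁) μ)
      (EDQE.integrable_of_bdd hnm (fun y₁ => hbd n₂ y₁) μ),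
      hswap p₂, hswap n₂, hp₂, hn₂, EDQE.jordan_univ_eq hγ₂, sub_self]
  -- expansion of the inner signed integral against the perturbed second measure
  have hβexp : (fun y₁ => signedIntegral (ν.toSignedMeasure + t • γ₂) (fun y₂ =>
      gibbsDensity ε φ₁ φ₀ c y₁ y₂)) = fun y₁ => 1 + t * g y₁ := by
    funext y₁
    rw [EDQE.signedIntegral_add _ _ (hξint y₁),
      EDQE.signedIntegral_toSignedMeasure ν (hξint y₁), hνnorm y₁,
      EDQE.signedIntegral_smul, hgdef]
  have hFint : ∀ (κ : Measure 𝒴) [IsFiniteMeasure κ],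
      Integrable (fun y₁ => 1 + t * g y₁) κ :=
    fun κ _ => (integrable_const 1).add ((hgint κ).const_mul t)
  -- the inner integral against the unperturbed ν is constantly 1
  have hν1 : (fun y₁ => signedIntegral ν.toSignedMeasure (fun y₂ =>
      gibbsDensity ε φ₁ φ₀ c y₁ y₂)) = fun _ => (1 : ℝ) := by
    funext y₁
    rw [EDQE.signedIntegral_toSignedMeasure ν (hξint y₁), hνnorm y₁]
  have h1μ : signedIntegral μ.toSignedMeasure (fun _ => (1 : ℝ)) = 1 := by
    rw [EDQE.signedIntegral_toSignedMeasure μ (fun κ _ => integrable_const 1)]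
    simp
  have hFμ : (∫ y₁, (1 + t * g y₁) ∂μ) = 1 := by
    rw [integral_add (integrable_const 1) ((hgint μ).const_mul t), integral_const_mul, hgμ]
    simp
  simp only [entropicDual]
  rw [hβexp, hν1, h1μ,
    EDQE.signedIntegral_add _ _ hφ₁int, EDQE.signedIntegral_toSignedMeasure μ hφ₁int,
    EDQE.signedIntegral_smul,
    EDQE.signedIntegral_add _ _ hφ₀int, EDQE.signedIntegral_toSignedMeasure ν hφ₀int,
    EDQE.signedIntegral_smul,
    EDQE.signedIntegral_add _ _ hFint, EDQE.signedIntegral_toSignedMeasure μ hFint, hFμ,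
    EDQE.signedIntegral_smul,
    EDQE.signedIntegral_const_add_mul γ₁ hγ₁ 1 t hgint]
  ring
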